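/- The Fréchet differential DS_L : 𝒪 → H* is Lipschitz continuous on every bounded convex subset of 𝒪; more precisely, for every bounded convex set B ⊆ 𝒪 there is a constant C (depending only on ℓ₁, n and a bound for B) such that ‖DS_L(γ₁) − DS_L(γ₂)‖_{H*} ≤ C ‖γ₁ − γ₂‖_H for all γ₁, γ₂ ∈ B. -/

import Mathlib

open MeasureTheory Set Filter Topology ContDiff
open scoped RealInnerProductSpace

noncomputable section

/-- Euclidean space `ℝ^n`. -/
abbrev E (n : ℕ) : Type := EuclideanSpace ℝ (Fin n)

/-- Lebesgue measure restricted to the interval `[0,1]`. -/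
abbrev μ01 : Measure ℝ := volume.restrict (Set.Icc (0:ℝ) 1)

instance : IsFiniteMeasure μ01 :=
  ⟨by rw [Measure.restrict_apply_univ]; simp [Real.volume_Icc]⟩

/-- The Hilbert space `H = ℝ^n × L²([0,1],ℝ^n)`, the standard model of `H¹([0,1],ℝ^n)`
via `u ↦ (u 0, u')`. -/
abbrev Hsp (n : ℕ) : Type := E n × Lp (E n) 2 μ01

variable {n : ℕ}

/-- The absolutely continuous path associated to `(x,w) ∈ H`:  `t ↦ x + ∫_0^t w(s) ds`. -/
def pathH (p : Hsp n) : ℝ → E n :=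
  fun t => p.1 + ∫ s in Set.Ioc (0:ℝ) t, p.2 s ∂μ01

/-- The open set `𝒪 ⊆ H` of those `(x,w)` whose path stays in `U`. -/
def actO (U : Set (E n)) : Set (Hsp n) :=
  {p | ∀ t ∈ Set.Icc (0:ℝ) 1, pathH p t ∈ U}

/-- The Lagrangian action functional `S_L`. -/
def action (L : ℝ → E n → E n → ℝ) (p : Hsp n) : ℝ :=
  ∫ t, L t (pathH p t) (p.2 t) ∂μ01

/-- The first differential of the action functional:
`DS_L(p)[ξ] = ∫_0^1 ( ∂L/∂q · ξ + ∂L/∂v · ξ' ) dt`. -/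
def dAct (Lq Lv : ℝ → E n → E n → E n) (p ξ : Hsp n) : ℝ :=
  ∫ t, (⟪Lq t (pathH p t) (p.2 t), pathH ξ t⟫ + ⟪Lv t (pathH p t) (p.2 t), ξ.2 t⟫) ∂μ01

/-- The second Gateaux differential of the action functional:
`d²S_L(p)[ξ,η] = ∫_0^1 ( ∂²L/∂v² ξ'·η' + ∂²L/∂v∂q ξ'·η + ∂²L/∂q∂v ξ·η' + ∂²L/∂q² ξ·η ) dt`. -/
def d2Act (Lvv Lqv Lqq : ℝ → E n → E n → (E n →L[ℝ] E n)) (p ξ η : Hsp n) : ℝ :=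
  ∫ t, (⟪Lvv t (pathH p t) (p.2 t) (ξ.2 t), η.2 t⟫
      + ⟪Lqv t (pathH p t) (p.2 t) (pathH ξ t), η.2 t⟫
      + ⟪Lqv t (pathH p t) (p.2 t) (pathH η t), ξ.2 t⟫
      + ⟪Lqq t (pathH p t) (p.2 t) (pathH ξ t), pathH η t⟫) ∂μ01

/-- The `H`-inner product `⟨(x,w),(y,z)⟩ = x·y + ⟨w,z⟩_{L²}`. -/
def innH (p q : Hsp n) : ℝ := ⟪p.1, q.1⟫ + ⟪p.2, q.2⟫

lemma pathH_add (p q : Hsp n) (t : ℝ) (_ht : t ∈ Set.Icc (0:ℝ) 1) :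
    pathH (p + q) t = pathH p t + pathH q t := by
  have hint : ∀ r : Hsp n, Integrable (r.2 : ℝ → E n) (μ01.restrict (Set.Ioc (0:ℝ) t)) :=
    fun r => ((Lp.memLp r.2).integrable (by norm_num)).restrict
  have h1 : (((p + q).2 : Lp (E n) 2 μ01) : ℝ → E n)
      =ᵐ[μ01.restrict (Set.Ioc (0:ℝ) t)] fun s => p.2 s + q.2 s :=
    ae_restrict_of_ae (Lp.coeFn_add p.2 q.2)
  have h2 : ∫ s in Set.Ioc (0:ℝ) t, (p + q).2 s ∂μ01
      = (∫ s in Set.Ioc (0:ℝ) t, p.2 s ∂μ01) + ∫ s in Set.Ioc (0:ℝ) t, q.2 s ∂μ01 := by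
    rw [integral_congr_ae h1]
    exact integral_add (hint p) (hint q)
  simp only [pathH, Prod.fst_add, h2]
  abel

lemma pathH_smul (c : ℝ) (p : Hsp n) (t : ℝ) (_ht : t ∈ Set.Icc (0:ℝ) 1) :
    pathH (c • p) t = c • pathH p t := by
  have h1 : (((c • p).2 : Lp (E n) 2 μ01) : ℝ → E n)
      =ᵐ[μ01.restrict (Set.Ioc (0:ℝ) t)] fun s => c • (p.2 s) :=
    ae_restrict_of_ae (Lp.coeFn_smul c p.2)
  have h2 : ∫ s in Set.Ioc (0:ℝ) t, (c • p).2 s ∂μ01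
      = c • ∫ s in Set.Ioc (0:ℝ) t, p.2 s ∂μ01 := by
    rw [integral_congr_ae h1]
    exact integral_smul c _
  simp only [pathH, Prod.smul_fst, h2, smul_add]

lemma pathH_zero (t : ℝ) (_ht : t ∈ Set.Icc (0:ℝ) 1) : pathH (0 : Hsp n) t = 0 := by
  have h1 : (((0 : Hsp n).2 : Lp (E n) 2 μ01) : ℝ → E n)
      =ᵐ[μ01.restrict (Set.Ioc (0:ℝ) t)] fun _ => (0 : E n) :=
    ae_restrict_of_ae (Lp.coeFn_zero (E n) 2 μ01)
  simp only [pathH]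
  rw [integral_congr_ae h1]
  simp

/-- The closed subspace `H_W = {(x,w) : (γ(0),γ(1)) ∈ W}` of `H`. -/
def HWsub (W : Submodule ℝ (E n × E n)) : Submodule ℝ (Hsp n) where
  carrier := {p | (pathH p 0, pathH p 1) ∈ W}
  add_mem' := by
    intro p q hp hq
    simp only [Set.mem_setOf_eq] at *
    rw [pathH_add p q 0 (by norm_num), pathH_add p q 1 (by norm_num)]
    exact W.add_mem hp hq
  zero_mem' := by
    simp only [Set.mem_setOf_eq]
    rw [pathH_zero 0 (by norm_num), pathH_zero 1 (by norm_num)]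
    exact W.zero_mem
  smul_mem' := by
    intro c p hp
    simp only [Set.mem_setOf_eq] at *
    rw [pathH_smul c p 0 (by norm_num), pathH_smul c p 1 (by norm_num)]
    exact W.smul_mem c hp

/-- The auxiliary inner product `⟨ξ,η⟩₀ = ∫ ∂²L/∂v²(t,0,0) ξ'·η' dt + ∫ ξ·η dt` on `H_W`. -/
def inn0 (Lvv : ℝ → E n → E n → (E n →L[ℝ] E n)) (ξ η : Hsp n) : ℝ :=
  (∫ t, ⟪Lvv t 0 0 (ξ.2 t), η.2 t⟫ ∂μ01) + ∫ t, ⟪pathH ξ t, pathH η t⟫ ∂μ01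

section Helpers

open MeasureTheory Set
open scoped RealInnerProductSpace ENNReal

variable {n : ℕ}

instance : IsProbabilityMeasure (μ01) :=
  ⟨by rw [Measure.restrict_apply_univ]; simp [Real.volume_Icc]⟩

lemma my_integrable_L2 (f : Lp (E n) 2 μ01) : Integrable (f : ℝ → E n) μ01 :=
  (Lp.memLp f).integrable one_le_two

lemma my_cs {F G : Type*} [NormedAddCommGroup F] [NormedAddCommGroup G]
    {f : ℝ → F} {g : ℝ → G} (hf : MemLp f 2 μ01) (hg : MemLp g 2 μ01) :
    ∫ t, ‖f t‖ * ‖g t‖ ∂μ01 ≤ (eLpNorm f 2 μ01).toReal * (eLpNorm g 2 μ01).toReal := by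
  have h22 : (2:ℝ).HolderConjugate 2 := ⟨by norm_num, by norm_num, by norm_num⟩
  have h2e : ENNReal.ofReal (2:ℝ) = 2 := by norm_num
  have H' := MeasureTheory.integral_mul_norm_le_Lp_mul_Lq h22
    (show MemLp (fun t => ‖f t‖) (ENNReal.ofReal 2) μ01 by rw [h2e]; exact hf.norm)
    (show MemLp (fun t => ‖g t‖) (ENNReal.ofReal 2) μ01 by rw [h2e]; exact hg.norm)
  simp only [norm_norm] at H'
  have H : ∫ t, ‖f t‖ * ‖g t‖ ∂μ01
      ≤ (∫ t, ‖f t‖ ^ (2:ℝ) ∂μ01) ^ (1/(2:ℝ)) * (∫ t, ‖g t‖ ^ (2:ℝ) ∂μ01) ^ (1/(2:ℝ)) := H'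
  have h2 : ((2:ℝ≥0∞)).toReal = 2 := by simp
  rw [hf.eLpNorm_eq_integral_rpow_norm two_ne_zero ENNReal.ofNat_ne_top,
    hg.eLpNorm_eq_integral_rpow_norm two_ne_zero ENNReal.ofNat_ne_top,
    ENNReal.toReal_ofReal (Real.rpow_nonneg
      (integral_nonneg fun t => Real.rpow_nonneg (norm_nonneg _) _) _),
    ENNReal.toReal_ofReal (Real.rpow_nonneg
      (integral_nonneg fun t => Real.rpow_nonneg (norm_nonneg _) _) _), h2]
  simpa [one_div] using H

lemma my_eLpNorm_toReal (f : Lp (E n) 2 μ01) : (eLpNorm (f : ℝ → E n) 2 μ01).toReal = ‖f‖ :=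
  (Lp.norm_def f).symm

lemma my_integral_norm_le (f : Lp (E n) 2 μ01) : ∫ t, ‖f t‖ ∂μ01 ≤ ‖f‖ := by
  have H := my_cs (Lp.memLp f) (memLp_const (1:ℝ) (μ := μ01))
  have hc : (eLpNorm (fun _ : ℝ => (1:ℝ)) 2 μ01).toReal = 1 := by
    rw [eLpNorm_const (1:ℝ) two_ne_zero (IsProbabilityMeasure.ne_zero μ01)]
    simp
  rw [hc, my_eLpNorm_toReal] at H
  simpa using H

lemma my_pathH_norm_le (p : Hsp n) {t : ℝ} (_ht : t ∈ Icc (0:ℝ) 1) :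
    ‖pathH p t‖ ≤ ‖p.1‖ + ‖p.2‖ := by
  have h1 : ‖∫ s in Ioc (0:ℝ) t, p.2 s ∂μ01‖ ≤ ∫ s in Ioc (0:ℝ) t, ‖p.2 s‖ ∂μ01 :=
    norm_integral_le_integral_norm _
  have h2 : ∫ s in Ioc (0:ℝ) t, ‖p.2 s‖ ∂μ01 ≤ ∫ s, ‖p.2 s‖ ∂μ01 :=
    setIntegral_le_integral (my_integrable_L2 p.2).norm
      (Eventually.of_forall fun s => norm_nonneg _)
  calc ‖pathH p t‖ ≤ ‖p.1‖ + ‖∫ s in Ioc (0:ℝ) t, p.2 s ∂μ01‖ := norm_add_le _ _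
    _ ≤ ‖p.1‖ + ‖p.2‖ := by
        have := my_integral_norm_le p.2
        linarith

lemma my_pathH_sub (p q : Hsp n) (t : ℝ) (ht : t ∈ Icc (0:ℝ) 1) :
    pathH (p - q) t = pathH p t - pathH q t := by
  have := pathH_add (p - q) q t ht
  rw [sub_add_cancel] at this
  rw [this]; abel

end Helpers
section Helpers2

open MeasureTheory Set
open scoped RealInnerProductSpace ENNReal

variable {n : ℕ}

lemma my_pathH_contRep (γ : Hsp n) :
    ∃ h : ℝ → E n, Continuous h ∧ ∀ t ∈ Icc (0:ℝ) 1, pathH γ t = h t := by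
  refine ⟨fun t => γ.1 + ∫ s in (0:ℝ)..t, γ.2 s ∂μ01, ?_, ?_⟩
  · exact continuous_const.add ((my_integrable_L2 γ.2).continuous_primitive 0)
  · intro t ht
    simp only [pathH]
    rw [intervalIntegral.integral_of_le ht.1]

lemma my_aesm_pathH (γ : Hsp n) : AEStronglyMeasurable (fun t => pathH γ t) μ01 := by
  obtain ⟨h, hc, he⟩ := my_pathH_contRep γ
  refine (hc.aestronglyMeasurable).congr ?_
  filter_upwards [ae_restrict_mem measurableSet_Icc] with t ht
  exact (he t ht).symm

lemma my_aesm_comp {U : Set (E n)} (hU : IsOpen U) (G : ℝ → E n → E n → E n)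
    (hG : ContinuousOn (fun z : ℝ × E n × E n => G z.1 z.2.1 z.2.2)
      (univ ×ˢ U ×ˢ univ))
    {γ : Hsp n} (hγ : γ ∈ actO U) :
    AEStronglyMeasurable (fun t => G t (pathH γ t) (γ.2 t)) μ01 := by
  classical
  set S : Set (ℝ × E n × E n) := univ ×ˢ U ×ˢ univ with hS
  have hSopen : IsOpen S := isOpen_univ.prod (hU.prod isOpen_univ)
  obtain ⟨h, hc, he⟩ := my_pathH_contRep γ
  set G' : ℝ × E n × E n → E n :=
    S.piecewise (fun z => G z.1 z.2.1 z.2.2) (fun _ => 0) with hG'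
  have hG'm : Measurable G' :=
    ContinuousOn.measurable_piecewise hG continuousOn_const hSopen.measurableSet
  have hz : AEMeasurable (fun t => ((t, h t, γ.2 t) : ℝ × E n × E n)) μ01 :=
    measurable_id.aemeasurable.prodMk
      (hc.measurable.aemeasurable.prodMk (Lp.aestronglyMeasurable γ.2).aemeasurable)
  have h1 : AEMeasurable (fun t => G' (t, h t, γ.2 t)) μ01 := hG'm.comp_aemeasurable hz
  refine h1.aestronglyMeasurable.congr ?_
  filter_upwards [ae_restrict_mem measurableSet_Icc] with t ht
  have hmem : ((t, h t, γ.2 t) : ℝ × E n × E n) ∈ S := by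
    refine ⟨mem_univ _, ?_, mem_univ _⟩
    rw [← he t ht]
    exact hγ t ht
  rw [hG', Set.piecewise_eq_of_mem _ _ _ hmem, ← he t ht]

end Helpers2
section Helpers3

open MeasureTheory Set ContDiff
open scoped RealInnerProductSpace

variable {n : ℕ}

lemma my_one_le_infty : (1 : WithTop ℕ∞) ≤ ∞ := by
  exact_mod_cast (le_top : (1:ℕ∞) ≤ ⊤)

lemma my_contOn_grad_q {U : Set (E n)} (hU : IsOpen U) (L : ℝ → E n → E n → ℝ)
    (Lq : ℝ → E n → E n → E n)
    (hL : ContDiffOn ℝ ∞ (fun z : ℝ × E n × E n => L z.1 z.2.1 z.2.2)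
      (univ ×ˢ U ×ˢ univ))
    (hLq : ∀ (t : ℝ), ∀ q ∈ U, ∀ v : E n, HasGradientAt (fun q' => L t q' v) (Lq t q v) q) :
    ContinuousOn (fun z : ℝ × E n × E n => Lq z.1 z.2.1 z.2.2) (univ ×ˢ U ×ˢ univ) := by
  set F := fun z : ℝ × E n × E n => L z.1 z.2.1 z.2.2 with hF
  set S : Set (ℝ × E n × E n) := univ ×ˢ U ×ˢ univ with hSdef
  have hSopen : IsOpen S := isOpen_univ.prod (hU.prod isOpen_univ)
  have hderiv : ContinuousOn (fderiv ℝ F) S :=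
    hL.continuousOn_fderiv_of_isOpen hSopen my_one_le_infty
  set J : E n →L[ℝ] ℝ × E n × E n :=
    (0 : E n →L[ℝ] ℝ).prod ((ContinuousLinearMap.id ℝ (E n)).prod 0) with hJ
  have key : ∀ z ∈ S, Lq z.1 z.2.1 z.2.2
      = (InnerProductSpace.toDual ℝ (E n)).symm ((fderiv ℝ F z).comp J) := by
    intro z hz
    have hdF : HasFDerivAt F (fderiv ℝ F z) z :=
      ((hL.differentiableOn (ne_of_gt (lt_of_lt_of_le zero_lt_one my_one_le_infty))).differentiableAt
        (hSopen.mem_nhds hz)).hasFDerivAt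
    have hj : HasFDerivAt (fun q' : E n => ((z.1, q', z.2.2) : ℝ × E n × E n)) J z.2.1 :=
      HasFDerivAt.prodMk (hasFDerivAt_const z.1 _) (HasFDerivAt.prodMk (hasFDerivAt_id _) (hasFDerivAt_const z.2.2 _))
    have hcomp : HasFDerivAt (fun q' => F (z.1, q', z.2.2))
        ((fderiv ℝ F z).comp J) z.2.1 := by have := hdF.comp z.2.1 hj; exact this
    have hg : HasFDerivAt (fun q' => L z.1 q' z.2.2)
        (InnerProductSpace.toDual ℝ (E n) (Lq z.1 z.2.1 z.2.2)) z.2.1 :=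
      (hLq z.1 z.2.1 hz.2.1 z.2.2).hasFDerivAt
    have huniq := hg.unique hcomp
    rw [← huniq]
    simp
  refine ContinuousOn.congr ?_ key
  apply (LinearIsometryEquiv.continuous _).comp_continuousOn
  exact (((ContinuousLinearMap.compL ℝ (E n) (ℝ × E n × E n) ℝ).flip J).continuous).comp_continuousOn
    hderiv

lemma my_contOn_grad_v {U : Set (E n)} (hU : IsOpen U) (L : ℝ → E n → E n → ℝ)
    (Lv : ℝ → E n → E n → E n)
    (hL : ContDiffOn ℝ ∞ (fun z : ℝ × E n × E n => L z.1 z.2.1 z.2.2)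
      (univ ×ˢ U ×ˢ univ))
    (hLv : ∀ (t : ℝ), ∀ q ∈ U, ∀ v : E n, HasGradientAt (fun v' => L t q v') (Lv t q v) v) :
    ContinuousOn (fun z : ℝ × E n × E n => Lv z.1 z.2.1 z.2.2) (univ ×ˢ U ×ˢ univ) := by
  set F := fun z : ℝ × E n × E n => L z.1 z.2.1 z.2.2 with hF
  set S : Set (ℝ × E n × E n) := univ ×ˢ U ×ˢ univ with hSdef
  have hSopen : IsOpen S := isOpen_univ.prod (hU.prod isOpen_univ)
  have hderiv : ContinuousOn (fderiv ℝ F) S :=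
    hL.continuousOn_fderiv_of_isOpen hSopen my_one_le_infty
  set J : E n →L[ℝ] ℝ × E n × E n :=
    (0 : E n →L[ℝ] ℝ).prod ((0 : E n →L[ℝ] E n).prod (ContinuousLinearMap.id ℝ (E n))) with hJ
  have key : ∀ z ∈ S, Lv z.1 z.2.1 z.2.2
      = (InnerProductSpace.toDual ℝ (E n)).symm ((fderiv ℝ F z).comp J) := by
    intro z hz
    have hdF : HasFDerivAt F (fderiv ℝ F z) z :=
      ((hL.differentiableOn (ne_of_gt (lt_of_lt_of_le zero_lt_one my_one_le_infty))).differentiableAt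
        (hSopen.mem_nhds hz)).hasFDerivAt
    have hj : HasFDerivAt (fun v' : E n => ((z.1, z.2.1, v') : ℝ × E n × E n)) J z.2.2 :=
      HasFDerivAt.prodMk (hasFDerivAt_const z.1 _) (HasFDerivAt.prodMk (hasFDerivAt_const z.2.1 _) (hasFDerivAt_id _))
    have hcomp : HasFDerivAt (fun v' => F (z.1, z.2.1, v'))
        ((fderiv ℝ F z).comp J) z.2.2 := by have := hdF.comp z.2.2 hj; exact this
    have hg : HasFDerivAt (fun v' => L z.1 z.2.1 v')
        (InnerProductSpace.toDual ℝ (E n) (Lv z.1 z.2.1 z.2.2)) z.2.2 :=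
      (hLv z.1 z.2.1 hz.2.1 z.2.2).hasFDerivAt
    have huniq := hg.unique hcomp
    rw [← huniq]
    simp
  refine ContinuousOn.congr ?_ key
  apply (LinearIsometryEquiv.continuous _).comp_continuousOn
  exact (((ContinuousLinearMap.compL ℝ (E n) (ℝ × E n × E n) ℝ).flip J).continuous).comp_continuousOn
    hderiv

end Helpers3
section Helpers4

open MeasureTheory Set
open scoped RealInnerProductSpace

variable {n : ℕ}

lemma my_seg_norm_le (v₁ v₂ : E n) {θ : ℝ} (h0 : 0 ≤ θ) (h1 : θ ≤ 1) :
    ‖v₂ + θ • (v₁ - v₂)‖ ≤ ‖v₁‖ + ‖v₂‖ := by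
  have he : v₂ + θ • (v₁ - v₂) = (1 - θ) • v₂ + θ • v₁ := by module
  rw [he]
  calc ‖(1 - θ) • v₂ + θ • v₁‖ ≤ ‖(1 - θ) • v₂‖ + ‖θ • v₁‖ := norm_add_le _ _
    _ = (1 - θ) * ‖v₂‖ + θ * ‖v₁‖ := by
        rw [norm_smul, norm_smul, Real.norm_eq_abs, Real.norm_eq_abs,
          abs_of_nonneg (by linarith), abs_of_nonneg h0]
    _ ≤ ‖v₁‖ + ‖v₂‖ := by nlinarith [norm_nonneg v₁, norm_nonneg v₂]

lemma my_mvt {f : E n → E n} {f' : E n → (E n →L[ℝ] E n)} {q₁ q₂ : E n} {C : ℝ}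
    (hd : ∀ θ ∈ Icc (0:ℝ) 1, HasFDerivAt f (f' (q₂ + θ • (q₁ - q₂))) (q₂ + θ • (q₁ - q₂)))
    (hbound : ∀ θ ∈ Icc (0:ℝ) 1, ‖f' (q₂ + θ • (q₁ - q₂))‖ ≤ C) :
    ‖f q₁ - f q₂‖ ≤ C * ‖q₁ - q₂‖ := by
  set φ : ℝ → E n := fun θ => f (q₂ + θ • (q₁ - q₂)) with hφ
  have hdφ : ∀ θ ∈ Icc (0:ℝ) 1, HasDerivWithinAt φ
      (f' (q₂ + θ • (q₁ - q₂)) (q₁ - q₂)) (Icc (0:ℝ) 1) θ := by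
    intro θ hθ
    have hpath : HasDerivAt (fun θ : ℝ => q₂ + θ • (q₁ - q₂)) (q₁ - q₂) θ := by
      simpa using ((hasDerivAt_id θ).smul_const (q₁ - q₂)).const_add q₂
    exact ((hd θ hθ).comp_hasDerivAt θ hpath).hasDerivWithinAt
  have hb : ∀ θ ∈ Ico (0:ℝ) 1, ‖f' (q₂ + θ • (q₁ - q₂)) (q₁ - q₂)‖ ≤ C * ‖q₁ - q₂‖ := by
    intro θ hθ
    calc ‖f' (q₂ + θ • (q₁ - q₂)) (q₁ - q₂)‖
        ≤ ‖f' (q₂ + θ • (q₁ - q₂))‖ * ‖q₁ - q₂‖ := ContinuousLinearMap.le_opNorm _ _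
      _ ≤ C * ‖q₁ - q₂‖ :=
          mul_le_mul_of_nonneg_right (hbound θ (Ico_subset_Icc_self hθ)) (norm_nonneg _)
  have H := norm_image_sub_le_of_norm_deriv_le_segment_01' hdφ hb
  have h1 : φ 1 = f q₁ := by simp [hφ]
  have h0 : φ 0 = f q₂ := by simp [hφ]
  rwa [h1, h0] at H

lemma my_diff_q {U : Set (E n)}
    (Lq : ℝ → E n → E n → E n) (Lvq Lqq : ℝ → E n → E n → (E n →L[ℝ] E n))
    (hLvq : ∀ (t : ℝ), ∀ q ∈ U, ∀ v : E n, HasFDerivAt (fun v' => Lq t q v') (Lvq t q v) v)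
    (hLqq : ∀ (t : ℝ), ∀ q ∈ U, ∀ v : E n, HasFDerivAt (fun q' => Lq t q' v) (Lqq t q v) q)
    {ℓ₁ : ℝ} (hℓ₁ : 0 < ℓ₁) {t : ℝ}
    (hbq : ∀ q ∈ U, ∀ v : E n, ‖Lqq t q v‖ ≤ ℓ₁ * (1 + ‖v‖ ^ 2))
    (hbv : ∀ q ∈ U, ∀ v : E n, ‖Lvq t q v‖ ≤ ℓ₁ * (1 + ‖v‖))
    {q₁ q₂ : E n} (v₁ v₂ : E n)
    (hseg : ∀ θ ∈ Icc (0:ℝ) 1, q₂ + θ • (q₁ - q₂) ∈ U) (hq₂ : q₂ ∈ U) :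
    ‖Lq t q₁ v₁ - Lq t q₂ v₂‖ ≤ ℓ₁ * (1 + (‖v₁‖ + ‖v₂‖) ^ 2) * ‖q₁ - q₂‖
      + ℓ₁ * (1 + ‖v₁‖ + ‖v₂‖) * ‖v₁ - v₂‖ := by
  have part1 : ‖Lq t q₁ v₁ - Lq t q₂ v₁‖ ≤ ℓ₁ * (1 + (‖v₁‖ + ‖v₂‖) ^ 2) * ‖q₁ - q₂‖ := by
    refine my_mvt (f := fun q' => Lq t q' v₁) (f' := fun q' => Lqq t q' v₁)
      (fun θ hθ => hLqq t _ (hseg θ hθ) v₁) ?_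
    intro θ hθ
    refine le_trans (hbq _ (hseg θ hθ) v₁) ?_
    nlinarith [mul_nonneg hℓ₁.le (mul_nonneg (norm_nonneg v₁) (norm_nonneg v₂)),
      mul_nonneg hℓ₁.le (sq_nonneg ‖v₂‖)]
  have part2 : ‖Lq t q₂ v₁ - Lq t q₂ v₂‖ ≤ ℓ₁ * (1 + ‖v₁‖ + ‖v₂‖) * ‖v₁ - v₂‖ := by
    refine my_mvt (f := fun v' => Lq t q₂ v') (f' := fun v' => Lvq t q₂ v')
      (fun θ _ => hLvq t q₂ hq₂ _) ?_
    intro θ hθ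
    refine le_trans (hbv q₂ hq₂ _) ?_
    have := my_seg_norm_le v₁ v₂ hθ.1 hθ.2
    nlinarith
  calc ‖Lq t q₁ v₁ - Lq t q₂ v₂‖
      = ‖(Lq t q₁ v₁ - Lq t q₂ v₁) + (Lq t q₂ v₁ - Lq t q₂ v₂)‖ := by abel_nf
    _ ≤ ‖Lq t q₁ v₁ - Lq t q₂ v₁‖ + ‖Lq t q₂ v₁ - Lq t q₂ v₂‖ := norm_add_le _ _
    _ ≤ _ := add_le_add part1 part2

lemma my_diff_v {U : Set (E n)}
    (Lv : ℝ → E n → E n → E n) (Lvv Lqv : ℝ → E n → E n → (E n →L[ℝ] E n))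
    (hLvv : ∀ (t : ℝ), ∀ q ∈ U, ∀ v : E n, HasFDerivAt (fun v' => Lv t q v') (Lvv t q v) v)
    (hLqv : ∀ (t : ℝ), ∀ q ∈ U, ∀ v : E n, HasFDerivAt (fun q' => Lv t q' v) (Lqv t q v) q)
    {ℓ₁ : ℝ} (hℓ₁ : 0 < ℓ₁) {t : ℝ}
    (hbv : ∀ q ∈ U, ∀ v : E n, ‖Lvv t q v‖ ≤ ℓ₁)
    (hbq : ∀ q ∈ U, ∀ v : E n, ‖Lqv t q v‖ ≤ ℓ₁ * (1 + ‖v‖))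
    {q₁ q₂ : E n} (v₁ v₂ : E n)
    (hseg : ∀ θ ∈ Icc (0:ℝ) 1, q₂ + θ • (q₁ - q₂) ∈ U) (hq₂ : q₂ ∈ U) :
    ‖Lv t q₁ v₁ - Lv t q₂ v₂‖ ≤ ℓ₁ * (1 + ‖v₁‖ + ‖v₂‖) * ‖q₁ - q₂‖ + ℓ₁ * ‖v₁ - v₂‖ := by
  have part1 : ‖Lv t q₁ v₁ - Lv t q₂ v₁‖ ≤ ℓ₁ * (1 + ‖v₁‖ + ‖v₂‖) * ‖q₁ - q₂‖ := by
    refine my_mvt (f := fun q' => Lv t q' v₁) (f' := fun q' => Lqv t q' v₁)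
      (fun θ hθ => hLqv t _ (hseg θ hθ) v₁) ?_
    intro θ hθ
    refine le_trans (hbq _ (hseg θ hθ) v₁) ?_
    nlinarith [mul_nonneg hℓ₁.le (norm_nonneg v₂)]
  have part2 : ‖Lv t q₂ v₁ - Lv t q₂ v₂‖ ≤ ℓ₁ * ‖v₁ - v₂‖ := by
    refine my_mvt (f := fun v' => Lv t q₂ v') (f' := fun v' => Lvv t q₂ v')
      (fun θ _ => hLvv t q₂ hq₂ _) ?_
    intro θ hθ
    exact hbv q₂ hq₂ _
  calc ‖Lv t q₁ v₁ - Lv t q₂ v₂‖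
      = ‖(Lv t q₁ v₁ - Lv t q₂ v₁) + (Lv t q₂ v₁ - Lv t q₂ v₂)‖ := by abel_nf
    _ ≤ ‖Lv t q₁ v₁ - Lv t q₂ v₁‖ + ‖Lv t q₂ v₁ - Lv t q₂ v₂‖ := norm_add_le _ _
    _ ≤ _ := add_le_add part1 part2

end Helpers4
section Helpers5

open MeasureTheory Set
open scoped RealInnerProductSpace

variable {n : ℕ}

lemma my_int_mul {f g : ℝ → ℝ} (hf : MemLp f 2 μ01) (hg : MemLp g 2 μ01) :
    Integrable (fun t => f t * g t) μ01 := by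
  refine Integrable.mono' ((hf.integrable_sq.add hg.integrable_sq).div_const 2)
    (hf.aestronglyMeasurable.mul hg.aestronglyMeasurable) ?_
  refine Eventually.of_forall fun t => ?_
  simp only [Pi.add_apply]
  rw [Real.norm_eq_abs, abs_mul]
  nlinarith [sq_nonneg (|f t| - |g t|), sq_abs (f t), sq_abs (g t), abs_nonneg (f t),
    abs_nonneg (g t)]

lemma my_integral_norm_sq (f : Lp (E n) 2 μ01) : ∫ t, ‖f t‖ ^ 2 ∂μ01 = ‖f‖ ^ 2 := by
  have h1 : ⟪f, f⟫ = ∫ t, ⟪f t, f t⟫ ∂μ01 := L2.inner_def (𝕜 := ℝ) f f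
  rw [real_inner_self_eq_norm_sq] at h1
  have h2 : ∫ t, ‖f t‖ ^ 2 ∂μ01 = ∫ t, ⟪f t, f t⟫ ∂μ01 :=
    integral_congr_ae (Eventually.of_forall fun t => (real_inner_self_eq_norm_sq _).symm)
  rw [h2]
  exact h1.symm

lemma my_cs_L2 (f g : Lp (E n) 2 μ01) : ∫ t, ‖f t‖ * ‖g t‖ ∂μ01 ≤ ‖f‖ * ‖g‖ := by
  have := my_cs (Lp.memLp f) (Lp.memLp g)
  rwa [my_eLpNorm_toReal, my_eLpNorm_toReal] at this

end Helpers5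

end

set_option maxHeartbeats 2000000 in
/-- The Fréchet differential `DS_L` is Lipschitz continuous on every bounded
convex subset of `𝒪`. -/
theorem dAction_lipschitzOn_bounded_convex
    {n : ℕ} (U : Set (E n)) (hU : IsOpen U)
    (L : ℝ → E n → E n → ℝ)
    (Lq Lv : ℝ → E n → E n → E n)
    (Lvv Lqv Lvq Lqq : ℝ → E n → E n → (E n →L[ℝ] E n))
    (hL : ContDiffOn ℝ ∞ (fun z : ℝ × E n × E n => L z.1 z.2.1 z.2.2)
      (Set.univ ×ˢ U ×ˢ Set.univ))
    (hLq : ∀ (t : ℝ), ∀ q ∈ U, ∀ v : E n, HasGradientAt (fun q' => L t q' v) (Lq t q v) q)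
    (hLv : ∀ (t : ℝ), ∀ q ∈ U, ∀ v : E n, HasGradientAt (fun v' => L t q v') (Lv t q v) v)
    (hLvv : ∀ (t : ℝ), ∀ q ∈ U, ∀ v : E n, HasFDerivAt (fun v' => Lv t q v') (Lvv t q v) v)
    (hLqv : ∀ (t : ℝ), ∀ q ∈ U, ∀ v : E n, HasFDerivAt (fun q' => Lv t q' v) (Lqv t q v) q)
    (hLvq : ∀ (t : ℝ), ∀ q ∈ U, ∀ v : E n, HasFDerivAt (fun v' => Lq t q v') (Lvq t q v) v)
    (hLqq : ∀ (t : ℝ), ∀ q ∈ U, ∀ v : E n, HasFDerivAt (fun q' => Lq t q' v) (Lqq t q v) q)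
    (ℓ₁ : ℝ) (hℓ₁ : 0 < ℓ₁)
    (hL1 : ∀ t ∈ Set.Icc (0:ℝ) 1, ∀ q ∈ U, ∀ v : E n,
      ‖Lvv t q v‖ ≤ ℓ₁ ∧ ‖Lqv t q v‖ ≤ ℓ₁ * (1 + ‖v‖) ∧ ‖Lvq t q v‖ ≤ ℓ₁ * (1 + ‖v‖)
        ∧ ‖Lqq t q v‖ ≤ ℓ₁ * (1 + ‖v‖ ^ 2))
    (D : Hsp n → (Hsp n →L[ℝ] ℝ))
    (hD : ∀ p ∈ actO U, ∀ ξ : Hsp n, D p ξ = dAct Lq Lv p ξ)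
    (B : Set (Hsp n)) (hBO : B ⊆ actO U) (hBconv : Convex ℝ B)
    (hBbdd : Bornology.IsBounded B) :
    ∃ C : ℝ, 0 ≤ C ∧ ∀ γ₁ ∈ B, ∀ γ₂ ∈ B, ‖D γ₁ - D γ₂‖ ≤ C * ‖γ₁ - γ₂‖ := by
    classical
  obtain ⟨R₀, hR₀⟩ := isBounded_iff_forall_norm_le.mp hBbdd
  set R : ℝ := max R₀ 0 with hRdef
  have hR0 : 0 ≤ R := le_max_right _ _
  have hRB : ∀ p ∈ B, ‖p‖ ≤ R := fun p hp => le_trans (hR₀ p hp) (le_max_left _ _)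
  set C : ℝ := ℓ₁ * (9 + 8 * R + 16 * R ^ 2) with hCdef
  have hC : 0 ≤ C := by
    have h1 : (0:ℝ) < 9 + 8 * R + 16 * R ^ 2 := by positivity
    rw [hCdef]; positivity
  refine ⟨C, hC, ?_⟩
  intro γ₁ h₁ γ₂ h₂
  have hLqc := my_contOn_grad_q hU L Lq hL hLq
  have hLvc := my_contOn_grad_v hU L Lv hL hLv
  have hR1 : ‖γ₁.2‖ ≤ R := le_trans (norm_snd_le γ₁) (hRB γ₁ h₁)
  have hR2 : ‖γ₂.2‖ ≤ R := le_trans (norm_snd_le γ₂) (hRB γ₂ h₂)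
  set δ : Hsp n := γ₁ - γ₂ with hδdef
  have key : ∀ ξ : Hsp n, |dAct Lq Lv γ₁ ξ - dAct Lq Lv γ₂ ξ| ≤ C * ‖δ‖ * ‖ξ‖ := by
    intro ξ
    set K : ℝ := ‖δ.1‖ + ‖δ.2‖ with hKdef
    set A : ℝ := ‖ξ.1‖ + ‖ξ.2‖ with hAdef
    have hK0 : 0 ≤ K := by rw [hKdef]; positivity
    have hA0 : 0 ≤ A := by rw [hAdef]; positivity
    have hK2 : K ≤ 2 * ‖δ‖ := by
      have ha := norm_fst_le δ; have hb := norm_snd_le δ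
      rw [hKdef]; linarith
    have hA2 : A ≤ 2 * ‖ξ‖ := by
      have ha := norm_fst_le ξ; have hb := norm_snd_le ξ
      rw [hAdef]; linarith
    set f₁ : ℝ → ℝ := fun t =>
      ⟪Lq t (pathH γ₁ t) (γ₁.2 t), pathH ξ t⟫ + ⟪Lv t (pathH γ₁ t) (γ₁.2 t), ξ.2 t⟫ with hf₁
    set f₂ : ℝ → ℝ := fun t =>
      ⟪Lq t (pathH γ₂ t) (γ₂.2 t), pathH ξ t⟫ + ⟪Lv t (pathH γ₂ t) (γ₂.2 t), ξ.2 t⟫ with hf₂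
    have hd1 : dAct Lq Lv γ₁ ξ = ∫ t, f₁ t ∂μ01 := rfl
    have hd2 : dAct Lq Lv γ₂ ξ = ∫ t, f₂ t ∂μ01 := rfl
    set g : ℝ → ℝ := fun t =>
      (ℓ₁ * (1 + (‖γ₁.2 t‖ + ‖γ₂.2 t‖) ^ 2) * K
        + ℓ₁ * (1 + ‖γ₁.2 t‖ + ‖γ₂.2 t‖) * ‖δ.2 t‖) * A
      + (ℓ₁ * (1 + ‖γ₁.2 t‖ + ‖γ₂.2 t‖) * K + ℓ₁ * ‖δ.2 t‖) * ‖ξ.2 t‖ with hgdef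
    -- pointwise a.e. bound
    have hae : ∀ᵐ t ∂μ01, ‖f₁ t - f₂ t‖ ≤ g t := by
      have hdsub : ∀ᵐ t ∂μ01, (δ.2 : ℝ → E n) t = γ₁.2 t - γ₂.2 t := by
        have h := Lp.coeFn_sub γ₁.2 γ₂.2
        rw [hδdef]
        filter_upwards [h] with t ht
        simpa using ht
      filter_upwards [ae_restrict_mem measurableSet_Icc, hdsub] with t ht hdt
      have hQseg : ∀ θ ∈ Set.Icc (0:ℝ) 1,
          pathH γ₂ t + θ • (pathH γ₁ t - pathH γ₂ t) ∈ U := by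
        intro θ hθ
        have hmemB : γ₂ + θ • (γ₁ - γ₂) ∈ B := by
          have hcv := hBconv h₂ h₁ (by linarith [hθ.2] : (0:ℝ) ≤ 1 - θ) hθ.1 (by ring)
          have he : (1 - θ) • γ₂ + θ • γ₁ = γ₂ + θ • (γ₁ - γ₂) := by module
          rwa [he] at hcv
        have hmem := hBO hmemB t ht
        rwa [pathH_add γ₂ (θ • (γ₁ - γ₂)) t ht, pathH_smul θ (γ₁ - γ₂) t ht,
          my_pathH_sub γ₁ γ₂ t ht] at hmem
      have hQ₂U : pathH γ₂ t ∈ U := hBO h₂ t ht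
      have hdq := my_diff_q (U := U) Lq Lvq Lqq hLvq hLqq hℓ₁ (t := t)
        (fun q hq v => (hL1 t ht q hq v).2.2.2) (fun q hq v => (hL1 t ht q hq v).2.2.1)
        (γ₁.2 t) (γ₂.2 t) hQseg hQ₂U
      have hdv := my_diff_v (U := U) Lv Lvv Lqv hLvv hLqv hℓ₁ (t := t)
        (fun q hq v => (hL1 t ht q hq v).1) (fun q hq v => (hL1 t ht q hq v).2.1)
        (γ₁.2 t) (γ₂.2 t) hQseg hQ₂U
      have hpe : pathH δ t = pathH γ₁ t - pathH γ₂ t := by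
        rw [hδdef]; exact my_pathH_sub γ₁ γ₂ t ht
      have hQK : ‖pathH γ₁ t - pathH γ₂ t‖ ≤ K := by
        rw [← hpe, hKdef]; exact my_pathH_norm_le δ ht
      have han : ‖pathH ξ t‖ ≤ A := by rw [hAdef]; exact my_pathH_norm_le ξ ht
      have hdn : ‖γ₁.2 t - γ₂.2 t‖ = ‖(δ.2 : ℝ → E n) t‖ := by rw [hdt]
      have c1 : (0:ℝ) ≤ ℓ₁ * (1 + (‖γ₁.2 t‖ + ‖γ₂.2 t‖) ^ 2) := by
        have := mul_pos hℓ₁ (show (0:ℝ) < 1 + (‖γ₁.2 t‖ + ‖γ₂.2 t‖) ^ 2 by positivity)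
        linarith
      have c2 : (0:ℝ) ≤ ℓ₁ * (1 + ‖γ₁.2 t‖ + ‖γ₂.2 t‖) := by
        have := mul_pos hℓ₁
          (show (0:ℝ) < 1 + ‖γ₁.2 t‖ + ‖γ₂.2 t‖ by positivity)
        linarith
      have hstep1 : ‖Lq t (pathH γ₁ t) (γ₁.2 t) - Lq t (pathH γ₂ t) (γ₂.2 t)‖
          ≤ ℓ₁ * (1 + (‖γ₁.2 t‖ + ‖γ₂.2 t‖) ^ 2) * K
            + ℓ₁ * (1 + ‖γ₁.2 t‖ + ‖γ₂.2 t‖) * ‖(δ.2 : ℝ → E n) t‖ := by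
        refine le_trans hdq ?_
        rw [← hdn]
        exact add_le_add (mul_le_mul_of_nonneg_left hQK c1) le_rfl
      have hstep2 : ‖Lv t (pathH γ₁ t) (γ₁.2 t) - Lv t (pathH γ₂ t) (γ₂.2 t)‖
          ≤ ℓ₁ * (1 + ‖γ₁.2 t‖ + ‖γ₂.2 t‖) * K + ℓ₁ * ‖(δ.2 : ℝ → E n) t‖ := by
        refine le_trans hdv ?_
        rw [← hdn]
        exact add_le_add (mul_le_mul_of_nonneg_left hQK c2)
          (mul_le_mul_of_nonneg_left le_rfl hℓ₁.le)
      have hf12 : f₁ t - f₂ t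
          = ⟪Lq t (pathH γ₁ t) (γ₁.2 t) - Lq t (pathH γ₂ t) (γ₂.2 t), pathH ξ t⟫
            + ⟪Lv t (pathH γ₁ t) (γ₁.2 t) - Lv t (pathH γ₂ t) (γ₂.2 t), ξ.2 t⟫ := by
        rw [hf₁, hf₂]
        simp only [inner_sub_left]
        ring
      rw [Real.norm_eq_abs, hf12, hgdef]
      calc |⟪Lq t (pathH γ₁ t) (γ₁.2 t) - Lq t (pathH γ₂ t) (γ₂.2 t), pathH ξ t⟫
            + ⟪Lv t (pathH γ₁ t) (γ₁.2 t) - Lv t (pathH γ₂ t) (γ₂.2 t), ξ.2 t⟫|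
          ≤ |⟪Lq t (pathH γ₁ t) (γ₁.2 t) - Lq t (pathH γ₂ t) (γ₂.2 t), pathH ξ t⟫|
            + |⟪Lv t (pathH γ₁ t) (γ₁.2 t) - Lv t (pathH γ₂ t) (γ₂.2 t), ξ.2 t⟫| :=
          abs_add_le _ _
        _ ≤ ‖Lq t (pathH γ₁ t) (γ₁.2 t) - Lq t (pathH γ₂ t) (γ₂.2 t)‖ * ‖pathH ξ t‖
            + ‖Lv t (pathH γ₁ t) (γ₁.2 t) - Lv t (pathH γ₂ t) (γ₂.2 t)‖ * ‖ξ.2 t‖ :=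
          add_le_add (abs_real_inner_le_norm _ _) (abs_real_inner_le_norm _ _)
        _ ≤ (ℓ₁ * (1 + (‖γ₁.2 t‖ + ‖γ₂.2 t‖) ^ 2) * K
              + ℓ₁ * (1 + ‖γ₁.2 t‖ + ‖γ₂.2 t‖) * ‖(δ.2 : ℝ → E n) t‖) * A
            + (ℓ₁ * (1 + ‖γ₁.2 t‖ + ‖γ₂.2 t‖) * K + ℓ₁ * ‖(δ.2 : ℝ → E n) t‖) * ‖ξ.2 t‖ :=
          add_le_add
            (mul_le_mul hstep1 han (norm_nonneg _) (le_trans (norm_nonneg _) hstep1))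
            (mul_le_mul_of_nonneg_right hstep2 (norm_nonneg _))
    -- measurability
    have hm1 : AEStronglyMeasurable f₁ μ01 := by
      rw [hf₁]
      exact ((my_aesm_comp hU Lq hLqc (hBO h₁)).inner (my_aesm_pathH ξ)).add
        ((my_aesm_comp hU Lv hLvc (hBO h₁)).inner (Lp.aestronglyMeasurable ξ.2))
    have hm2 : AEStronglyMeasurable f₂ μ01 := by
      rw [hf₂]
      exact ((my_aesm_comp hU Lq hLqc (hBO h₂)).inner (my_aesm_pathH ξ)).add
        ((my_aesm_comp hU Lv hLvc (hBO h₂)).inner (Lp.aestronglyMeasurable ξ.2))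
    -- integrability and bound for g
    have hv₁ : MemLp (fun t => ‖γ₁.2 t‖) 2 μ01 := (Lp.memLp γ₁.2).norm
    have hv₂ : MemLp (fun t => ‖γ₂.2 t‖) 2 μ01 := (Lp.memLp γ₂.2).norm
    have hdd : MemLp (fun t => ‖(δ.2 : ℝ → E n) t‖) 2 μ01 := (Lp.memLp δ.2).norm
    have hbb : MemLp (fun t => ‖(ξ.2 : ℝ → E n) t‖) 2 μ01 := (Lp.memLp ξ.2).norm
    have h1s : MemLp (fun t => 1 + ‖γ₁.2 t‖ + ‖γ₂.2 t‖) 2 μ01 :=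
      ((memLp_const (1:ℝ) (μ := μ01)).add hv₁).add hv₂
    have T1 : Integrable (fun t => 1 + (‖γ₁.2 t‖ + ‖γ₂.2 t‖) ^ 2) μ01 :=
      (integrable_const 1).add ((hv₁.add hv₂).integrable_sq)
    have T2 : Integrable (fun t => (1 + ‖γ₁.2 t‖ + ‖γ₂.2 t‖) * ‖(δ.2 : ℝ → E n) t‖) μ01 :=
      my_int_mul h1s hdd
    have T3 : Integrable (fun t => (1 + ‖γ₁.2 t‖ + ‖γ₂.2 t‖) * ‖(ξ.2 : ℝ → E n) t‖) μ01 :=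
      my_int_mul h1s hbb
    have T4 : Integrable (fun t => ‖(δ.2 : ℝ → E n) t‖ * ‖(ξ.2 : ℝ → E n) t‖) μ01 :=
      my_int_mul hdd hbb
    have hg_eq : g = fun t =>
        (ℓ₁ * K * A) * (1 + (‖γ₁.2 t‖ + ‖γ₂.2 t‖) ^ 2)
        + ((ℓ₁ * A) * ((1 + ‖γ₁.2 t‖ + ‖γ₂.2 t‖) * ‖(δ.2 : ℝ → E n) t‖)
        + ((ℓ₁ * K) * ((1 + ‖γ₁.2 t‖ + ‖γ₂.2 t‖) * ‖(ξ.2 : ℝ → E n) t‖)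
        + ℓ₁ * (‖(δ.2 : ℝ → E n) t‖ * ‖(ξ.2 : ℝ → E n) t‖))) := by
      funext t
      rw [hgdef]
      ring
    have hgint : Integrable g μ01 := by
      rw [hg_eq]
      exact (T1.const_mul _).add ((T2.const_mul _).add ((T3.const_mul _).add
        (T4.const_mul _)))
    have hgbound : ∫ t, g t ∂μ01 ≤ C * ‖δ‖ * ‖ξ‖ := by
      have hI1 : ∫ t, (1 + (‖γ₁.2 t‖ + ‖γ₂.2 t‖) ^ 2) ∂μ01 ≤ 1 + 4 * R ^ 2 := by
        have hsplit : (fun t => 1 + (‖γ₁.2 t‖ + ‖γ₂.2 t‖) ^ 2)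
            = fun t => 1 + (‖γ₁.2 t‖ ^ 2 + (2 * (‖γ₁.2 t‖ * ‖γ₂.2 t‖) + ‖γ₂.2 t‖ ^ 2)) := by
          funext t; ring
        have i1 : Integrable (fun t => ‖γ₁.2 t‖ ^ 2) μ01 := hv₁.integrable_sq
        have i2 : Integrable (fun t => ‖γ₂.2 t‖ ^ 2) μ01 := hv₂.integrable_sq
        have iab : Integrable (fun t => ‖γ₁.2 t‖ * ‖γ₂.2 t‖) μ01 := my_int_mul hv₁ hv₂
        have i2' : Integrable (fun t => 2 * (‖γ₁.2 t‖ * ‖γ₂.2 t‖)) μ01 := iab.const_mul 2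
        have i22 : Integrable (fun t => 2 * (‖γ₁.2 t‖ * ‖γ₂.2 t‖) + ‖γ₂.2 t‖ ^ 2) μ01 :=
          i2'.add i2
        have i122 : Integrable
            (fun t => ‖γ₁.2 t‖ ^ 2 + (2 * (‖γ₁.2 t‖ * ‖γ₂.2 t‖) + ‖γ₂.2 t‖ ^ 2)) μ01 :=
          i1.add i22
        rw [hsplit, integral_add (integrable_const 1) i122,
          integral_add i1 i22,
          integral_add i2' i2, integral_const_mul,
          my_integral_norm_sq γ₁.2, my_integral_norm_sq γ₂.2]
        have hab := my_cs_L2 γ₁.2 γ₂.2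
        have hconst : ∫ (_ : ℝ), (1:ℝ) ∂μ01 = 1 := by simp
        rw [hconst]
        nlinarith [norm_nonneg γ₁.2, norm_nonneg γ₂.2]
      have hI2 : ∫ t, (1 + ‖γ₁.2 t‖ + ‖γ₂.2 t‖) * ‖(δ.2 : ℝ → E n) t‖ ∂μ01
          ≤ (1 + 2 * R) * ‖δ.2‖ := by
        have hsplit : (fun t => (1 + ‖γ₁.2 t‖ + ‖γ₂.2 t‖) * ‖(δ.2 : ℝ → E n) t‖)
            = fun t => ‖(δ.2 : ℝ → E n) t‖ + (‖γ₁.2 t‖ * ‖(δ.2 : ℝ → E n) t‖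
              + ‖γ₂.2 t‖ * ‖(δ.2 : ℝ → E n) t‖) := by
          funext t; ring
        have i0 : Integrable (fun t => ‖(δ.2 : ℝ → E n) t‖) μ01 := (my_integrable_L2 δ.2).norm
        have i1 : Integrable (fun t => ‖γ₁.2 t‖ * ‖(δ.2 : ℝ → E n) t‖) μ01 :=
          my_int_mul hv₁ hdd
        have i2 : Integrable (fun t => ‖γ₂.2 t‖ * ‖(δ.2 : ℝ → E n) t‖) μ01 :=
          my_int_mul hv₂ hdd
        have i12 : Integrable (fun t => ‖γ₁.2 t‖ * ‖(δ.2 : ℝ → E n) t‖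
            + ‖γ₂.2 t‖ * ‖(δ.2 : ℝ → E n) t‖) μ01 := i1.add i2
        rw [hsplit, integral_add i0 i12, integral_add i1 i2]
        have e0 := my_integral_norm_le δ.2
        have e1 := my_cs_L2 γ₁.2 δ.2
        have e2 := my_cs_L2 γ₂.2 δ.2
        have hd0 : (0:ℝ) ≤ ‖δ.2‖ := norm_nonneg _
        nlinarith
      have hI3 : ∫ t, (1 + ‖γ₁.2 t‖ + ‖γ₂.2 t‖) * ‖(ξ.2 : ℝ → E n) t‖ ∂μ01
          ≤ (1 + 2 * R) * ‖ξ.2‖ := by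
        have hsplit : (fun t => (1 + ‖γ₁.2 t‖ + ‖γ₂.2 t‖) * ‖(ξ.2 : ℝ → E n) t‖)
            = fun t => ‖(ξ.2 : ℝ → E n) t‖ + (‖γ₁.2 t‖ * ‖(ξ.2 : ℝ → E n) t‖
              + ‖γ₂.2 t‖ * ‖(ξ.2 : ℝ → E n) t‖) := by
          funext t; ring
        have i0 : Integrable (fun t => ‖(ξ.2 : ℝ → E n) t‖) μ01 := (my_integrable_L2 ξ.2).norm
        have i1 : Integrable (fun t => ‖γ₁.2 t‖ * ‖(ξ.2 : ℝ → E n) t‖) μ01 :=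
          my_int_mul hv₁ hbb
        have i2 : Integrable (fun t => ‖γ₂.2 t‖ * ‖(ξ.2 : ℝ → E n) t‖) μ01 :=
          my_int_mul hv₂ hbb
        have i12 : Integrable (fun t => ‖γ₁.2 t‖ * ‖(ξ.2 : ℝ → E n) t‖
            + ‖γ₂.2 t‖ * ‖(ξ.2 : ℝ → E n) t‖) μ01 := i1.add i2
        rw [hsplit, integral_add i0 i12, integral_add i1 i2]
        have e0 := my_integral_norm_le ξ.2
        have e1 := my_cs_L2 γ₁.2 ξ.2
        have e2 := my_cs_L2 γ₂.2 ξ.2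
        have hd0 : (0:ℝ) ≤ ‖ξ.2‖ := norm_nonneg _
        nlinarith
      have hI4 : ∫ t, ‖(δ.2 : ℝ → E n) t‖ * ‖(ξ.2 : ℝ → E n) t‖ ∂μ01 ≤ ‖δ.2‖ * ‖ξ.2‖ :=
        my_cs_L2 δ.2 ξ.2
      have S1 : Integrable (fun t => (ℓ₁ * K * A) * (1 + (‖γ₁.2 t‖ + ‖γ₂.2 t‖) ^ 2)) μ01 :=
        T1.const_mul _
      have S2 : Integrable (fun t => (ℓ₁ * A) * ((1 + ‖γ₁.2 t‖ + ‖γ₂.2 t‖)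
          * ‖(δ.2 : ℝ → E n) t‖)) μ01 := T2.const_mul _
      have S3 : Integrable (fun t => (ℓ₁ * K) * ((1 + ‖γ₁.2 t‖ + ‖γ₂.2 t‖)
          * ‖(ξ.2 : ℝ → E n) t‖)) μ01 := T3.const_mul _
      have S4 : Integrable (fun t => ℓ₁ * (‖(δ.2 : ℝ → E n) t‖ * ‖(ξ.2 : ℝ → E n) t‖)) μ01 :=
        T4.const_mul _
      have S34 : Integrable (fun t => (ℓ₁ * K) * ((1 + ‖γ₁.2 t‖ + ‖γ₂.2 t‖)
          * ‖(ξ.2 : ℝ → E n) t‖)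
          + ℓ₁ * (‖(δ.2 : ℝ → E n) t‖ * ‖(ξ.2 : ℝ → E n) t‖)) μ01 := S3.add S4
      have S234 : Integrable (fun t => (ℓ₁ * A) * ((1 + ‖γ₁.2 t‖ + ‖γ₂.2 t‖)
          * ‖(δ.2 : ℝ → E n) t‖)
          + ((ℓ₁ * K) * ((1 + ‖γ₁.2 t‖ + ‖γ₂.2 t‖) * ‖(ξ.2 : ℝ → E n) t‖)
          + ℓ₁ * (‖(δ.2 : ℝ → E n) t‖ * ‖(ξ.2 : ℝ → E n) t‖))) μ01 := S2.add S34
      rw [hg_eq, integral_add S1 S234, integral_add S2 S34, integral_add S3 S4,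
        integral_const_mul, integral_const_mul, integral_const_mul, integral_const_mul]
      -- combine
      have hI1nn : (0:ℝ) ≤ ∫ t, (1 + (‖γ₁.2 t‖ + ‖γ₂.2 t‖) ^ 2) ∂μ01 :=
        integral_nonneg fun t => by positivity
      have hI2nn : (0:ℝ) ≤ ∫ t, (1 + ‖γ₁.2 t‖ + ‖γ₂.2 t‖) * ‖(δ.2 : ℝ → E n) t‖ ∂μ01 :=
        integral_nonneg fun t => by positivity
      have hI3nn : (0:ℝ) ≤ ∫ t, (1 + ‖γ₁.2 t‖ + ‖γ₂.2 t‖) * ‖(ξ.2 : ℝ → E n) t‖ ∂μ01 :=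
        integral_nonneg fun t => by positivity
      have hI4nn : (0:ℝ) ≤ ∫ t, ‖(δ.2 : ℝ → E n) t‖ * ‖(ξ.2 : ℝ → E n) t‖ ∂μ01 :=
        integral_nonneg fun t => by positivity
      have hdsn : ‖δ.2‖ ≤ ‖δ‖ := norm_snd_le δ
      have hxsn : ‖ξ.2‖ ≤ ‖ξ‖ := norm_snd_le ξ
      have hdnn : (0:ℝ) ≤ ‖δ‖ := norm_nonneg _
      have hxnn : (0:ℝ) ≤ ‖ξ‖ := norm_nonneg _
      have e1 : (ℓ₁ * K * A) * (∫ t, (1 + (‖γ₁.2 t‖ + ‖γ₂.2 t‖) ^ 2) ∂μ01)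
          ≤ ℓ₁ * ((2 * ‖δ‖) * (2 * ‖ξ‖) * (1 + 4 * R ^ 2)) := by
        have hKA : K * A ≤ (2 * ‖δ‖) * (2 * ‖ξ‖) := mul_le_mul hK2 hA2 hA0 (by positivity)
        have h5 : K * A * (∫ t, (1 + (‖γ₁.2 t‖ + ‖γ₂.2 t‖) ^ 2) ∂μ01)
            ≤ (2 * ‖δ‖) * (2 * ‖ξ‖) * (1 + 4 * R ^ 2) :=
          mul_le_mul hKA hI1 hI1nn (by positivity)
        calc (ℓ₁ * K * A) * (∫ t, (1 + (‖γ₁.2 t‖ + ‖γ₂.2 t‖) ^ 2) ∂μ01)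
            = ℓ₁ * (K * A * (∫ t, (1 + (‖γ₁.2 t‖ + ‖γ₂.2 t‖) ^ 2) ∂μ01)) := by ring
          _ ≤ _ := mul_le_mul_of_nonneg_left h5 hℓ₁.le
      have e2 : (ℓ₁ * A) * (∫ t, (1 + ‖γ₁.2 t‖ + ‖γ₂.2 t‖) * ‖(δ.2 : ℝ → E n) t‖ ∂μ01)
          ≤ ℓ₁ * ((2 * ‖ξ‖) * ((1 + 2 * R) * ‖δ‖)) := by
        have hI2' : ∫ t, (1 + ‖γ₁.2 t‖ + ‖γ₂.2 t‖) * ‖(δ.2 : ℝ → E n) t‖ ∂μ01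
            ≤ (1 + 2 * R) * ‖δ‖ :=
          le_trans hI2 (mul_le_mul_of_nonneg_left hdsn (by positivity))
        have h5 : A * (∫ t, (1 + ‖γ₁.2 t‖ + ‖γ₂.2 t‖) * ‖(δ.2 : ℝ → E n) t‖ ∂μ01)
            ≤ (2 * ‖ξ‖) * ((1 + 2 * R) * ‖δ‖) :=
          mul_le_mul hA2 hI2' hI2nn (by positivity)
        calc (ℓ₁ * A) * (∫ t, (1 + ‖γ₁.2 t‖ + ‖γ₂.2 t‖) * ‖(δ.2 : ℝ → E n) t‖ ∂μ01)
            = ℓ₁ * (A * (∫ t, (1 + ‖γ₁.2 t‖ + ‖γ₂.2 t‖) * ‖(δ.2 : ℝ → E n) t‖ ∂μ01)) := by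
              ring
          _ ≤ _ := mul_le_mul_of_nonneg_left h5 hℓ₁.le
      have e3 : (ℓ₁ * K) * (∫ t, (1 + ‖γ₁.2 t‖ + ‖γ₂.2 t‖) * ‖(ξ.2 : ℝ → E n) t‖ ∂μ01)
          ≤ ℓ₁ * ((2 * ‖δ‖) * ((1 + 2 * R) * ‖ξ‖)) := by
        have hI3' : ∫ t, (1 + ‖γ₁.2 t‖ + ‖γ₂.2 t‖) * ‖(ξ.2 : ℝ → E n) t‖ ∂μ01
            ≤ (1 + 2 * R) * ‖ξ‖ :=
          le_trans hI3 (mul_le_mul_of_nonneg_left hxsn (by positivity))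
        have h5 : K * (∫ t, (1 + ‖γ₁.2 t‖ + ‖γ₂.2 t‖) * ‖(ξ.2 : ℝ → E n) t‖ ∂μ01)
            ≤ (2 * ‖δ‖) * ((1 + 2 * R) * ‖ξ‖) :=
          mul_le_mul hK2 hI3' hI3nn (by positivity)
        calc (ℓ₁ * K) * (∫ t, (1 + ‖γ₁.2 t‖ + ‖γ₂.2 t‖) * ‖(ξ.2 : ℝ → E n) t‖ ∂μ01)
            = ℓ₁ * (K * (∫ t, (1 + ‖γ₁.2 t‖ + ‖γ₂.2 t‖) * ‖(ξ.2 : ℝ → E n) t‖ ∂μ01)) := by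
              ring
          _ ≤ _ := mul_le_mul_of_nonneg_left h5 hℓ₁.le
      have e4 : ℓ₁ * (∫ t, ‖(δ.2 : ℝ → E n) t‖ * ‖(ξ.2 : ℝ → E n) t‖ ∂μ01)
          ≤ ℓ₁ * (‖δ‖ * ‖ξ‖) := by
        have hI4' : ∫ t, ‖(δ.2 : ℝ → E n) t‖ * ‖(ξ.2 : ℝ → E n) t‖ ∂μ01 ≤ ‖δ‖ * ‖ξ‖ :=
          le_trans hI4 (mul_le_mul hdsn hxsn (norm_nonneg _) hdnn)
        exact mul_le_mul_of_nonneg_left hI4' hℓ₁.le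
      rw [hCdef]
      nlinarith [e1, e2, e3, e4, mul_nonneg (mul_nonneg hdnn hxnn) hR0,
        mul_nonneg hdnn hxnn]
    have hsub : Integrable (fun t => f₁ t - f₂ t) μ01 := hgint.mono' (hm1.sub hm2) hae
    rw [hd1, hd2]
    by_cases hi : Integrable f₂ μ01
    · have hi1 : Integrable f₁ μ01 := by
        have h := hsub.add hi
        refine h.congr (Eventually.of_forall fun t => ?_)
        simp
      rw [← integral_sub hi1 hi]
      calc |∫ t, (f₁ t - f₂ t) ∂μ01| ≤ ∫ t, ‖f₁ t - f₂ t‖ ∂μ01 := by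
            rw [← Real.norm_eq_abs]
            exact norm_integral_le_integral_norm _
        _ ≤ ∫ t, g t ∂μ01 := integral_mono_ae hsub.norm hgint hae
        _ ≤ C * ‖δ‖ * ‖ξ‖ := hgbound
    · have hi1 : ¬ Integrable f₁ μ01 := by
        intro h
        apply hi
        have h2 := h.sub hsub
        refine h2.congr (Eventually.of_forall fun t => ?_)
        simp
      rw [integral_undef hi1, integral_undef hi]
      simpa using mul_nonneg (mul_nonneg hC (norm_nonneg δ)) (norm_nonneg ξ)
  refine ContinuousLinearMap.opNorm_le_bound _ (mul_nonneg hC (norm_nonneg _)) fun ξ => ?_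
  rw [ContinuousLinearMap.sub_apply, hD γ₁ (hBO h₁) ξ, hD γ₂ (hBO h₂) ξ, Real.norm_eq_abs]
  exact key ξ
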